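/- Suppose a sequent A₁, …, A_k, F_Γ, !F_Δ ⊢ B₁, …, B_m is derivable in classical propositional linear logic, where each Aᵢ and Bⱼ is built from the constant ⊥ by ⊗ and ⊸ (one Aᵢ may be of the form E_{Y₁} ⊕ E_{Y₂}), Γ and Δ are multisets of normalized formulas and F denotes the ⊥-only encoding. Then Σᵢ #⊥(Aᵢ) ≡ 1 − m + Σⱼ #⊥(Bⱼ) (mod 9N). In particular, if m = 0 then Σᵢ #⊥(Aᵢ) ≡ 1 (mod 9N). -/

import Mathlib

/-- Formulas of propositional linear logic. -/
inductive LF where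
  | lit : ℕ → LF
  | bot : LF
  | one : LF
  | tensor : LF → LF → LF
  | par : LF → LF → LF
  | limp : LF → LF → LF
  | witha : LF → LF → LF
  | oplus : LF → LF → LF
  | bang : LF → LF
deriving DecidableEq

open LF

/-- n-fold tensor power, `A^0 = 1`, `A^1 = A`. -/
def tpow (A : LF) : ℕ → LF
  | 0 => one
  | 1 => A
  | n+2 => tensor A (tpow A (n+1))

/-- n-fold par power, `A^[0] = ⊥`, `A^[1] = A`. -/
def ppow (A : LF) : ℕ → LF
  | 0 => bot
  | 1 => A
  | n+2 => par A (ppow A (n+1))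

/-- Curried implication `A^⟨n⟩ ⊸ B`. -/
def cimp : ℕ → LF → LF → LF
  | 0, _, B => B
  | n+1, A, B => limp A (cimp n A B)

/-- Tensor product of a list of positive literals (a simple product). -/
def llprod : List LF → LF
  | [] => one
  | [A] => A
  | A :: B :: l => tensor A (llprod (B :: l))

/-- Simple product of literals given by their indices. -/
def sprod (X : List ℕ) : LF := llprod (X.map lit)

/-- The bottom-count `#⊥`. -/
def botCount : LF → ℤ
  | lit _ => 0
  | bot => 1
  | one => 0
  | tensor A B => botCount A + botCount B
  | par A B => botCount A + botCount B - 1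
  | limp A B => botCount B - botCount A
  | witha A B => min (botCount A) (botCount B)
  | oplus A B => max (botCount A) (botCount B)
  | bang A => botCount A

/-- Normalized formulas: Horn, ⊕-Horn, &-Horn, and elementary embedded
implications over simple products (lists of literal indices). -/
inductive NF where
  | horn : List ℕ → List ℕ → NF
  | ohorn : List ℕ → List ℕ → List ℕ → NF
  | whorn : List ℕ → List ℕ → List ℕ → List ℕ → NF
  | embed : List ℕ → List ℕ → List ℕ → NF
deriving DecidableEq

/-- All simple products occurring in a normalized formula are nonempty. -/
def NF.ok : NF → Prop
  | .horn X Y => X ≠ [] ∧ Y ≠ []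
  | .ohorn X Y₁ Y₂ => X ≠ [] ∧ Y₁ ≠ [] ∧ Y₂ ≠ []
  | .whorn X₁ Y₁ X₂ Y₂ => X₁ ≠ [] ∧ Y₁ ≠ [] ∧ X₂ ≠ [] ∧ Y₂ ≠ []
  | .embed U V Y => U ≠ [] ∧ V ≠ [] ∧ Y ≠ []

/-- The linear-logic formula denoted by a normalized formula. -/
def nfF : NF → LF
  | .horn X Y => limp (sprod X) (sprod Y)
  | .ohorn X Y₁ Y₂ => limp (sprod X) (oplus (sprod Y₁) (sprod Y₂))
  | .whorn X₁ Y₁ X₂ Y₂ => witha (limp (sprod X₁) (sprod Y₁)) (limp (sprod X₂) (sprod Y₂))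
  | .embed U V Y => limp (limp (sprod U) (sprod V)) (sprod Y)

/-! ⊥-only basic formulas -/

def H00 (N : ℕ) : LF := limp (tpow bot (N+2)) (tpow bot 2)
def C00 (N : ℕ) : LF := limp (limp (tpow (H00 N) 2) (tpow bot 3)) (tpow bot 3)
def H1 (N : ℕ) : LF := limp (tpow (C00 N) 4) (tpow bot N)

/-- `D_{p_m} = ((H₁ ⊸ ⊥^{m+4}) ⊸ ⊥^{m+4})`. -/
def Dl (N m : ℕ) : LF := limp (limp (H1 N) (tpow bot (m+4))) (tpow bot (m+4))

/-- `D_X`, the tensor product of `D_q` over the literals of a simple product `X`. -/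
def DX (N : ℕ) : List ℕ → LF
  | [] => one
  | [q] => Dl N q
  | q :: r :: l => tensor (Dl N q) (DX N (r :: l))

/-- `E_X = C₀₀^6 ⊗ D_X`. -/
def EX (N : ℕ) (X : List ℕ) : LF := tensor (tpow (C00 N) 6) (DX N X)

/-- The ⊥-only encoding `F_A` of a normalized formula `A`
(`p` is the distinguished leading literal). -/
def Fenc (N p : ℕ) : NF → LF
  | .horn X Y => limp (EX N (p :: X)) (EX N (p :: Y))
  | .ohorn X Y₁ Y₂ => limp (EX N (p :: X)) (oplus (EX N (p :: Y₁)) (EX N (p :: Y₂)))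
  | .whorn X₁ Y₁ X₂ Y₂ =>
      witha (limp (EX N (p :: X₁)) (EX N (p :: Y₁))) (limp (EX N (p :: X₂)) (EX N (p :: Y₂)))
  | .embed U V Y =>
      limp (limp (EX N (p :: U)) (EX N (p :: V))) (limp (EX N [p]) (EX N (p :: Y)))

/-! One-literal basic formulas (with leading literal `p`). -/

def H0t (N p : ℕ) : LF := cimp (N+2) (lit p) (tpow (lit p) 2)
def C0t (N p : ℕ) : LF := limp (cimp 2 (H0t N p) (tpow (lit p) 3)) (tpow (lit p) 3)
def H1t (N p : ℕ) : LF := cimp 4 (C0t N p) (tpow (lit p) N)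
def Dt (N p m : ℕ) : LF :=
  limp (limp (H1t N p) (tpow (lit p) (m+4))) (tpow (lit p) (m+4))

def Gt (N p : ℕ) : List ℕ → LF
  | [] => lit p
  | q :: l => limp (Dt N p q) (Gt N p l)

def Et (N p : ℕ) (X : List ℕ) : LF := cimp 6 (C0t N p) (Gt N p X)

/-- The one-literal encoding `F̃_A(p)`. -/
def Ften (N p : ℕ) : NF → LF
  | .horn X Y => limp (Et N p (p :: Y)) (Et N p (p :: X))
  | .ohorn X Y₁ Y₂ =>
      limp (witha (Et N p (p :: Y₁)) (Et N p (p :: Y₂))) (Et N p (p :: X))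
  | .whorn X₁ Y₁ X₂ Y₂ =>
      witha (limp (Et N p (p :: Y₁)) (Et N p (p :: X₁)))
            (limp (Et N p (p :: Y₂)) (Et N p (p :: X₂)))
  | .embed U V Y =>
      limp (limp (limp (Et N p (p :: Y)) (Et N p [p])) (lit p))
           (limp (limp (Et N p (p :: V)) (Et N p (p :: U))) (lit p))

/-- Substitution of `⊥` for the literal `p`. -/
def subB (p : ℕ) : LF → LF
  | lit q => if q = p then bot else lit q
  | bot => bot
  | one => one
  | tensor A B => tensor (subB p A) (subB p B)
  | par A B => par (subB p A) (subB p B)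
  | limp A B => limp (subB p A) (subB p B)
  | witha A B => witha (subB p A) (subB p B)
  | oplus A B => oplus (subB p A) (subB p B)
  | bang A => bang (subB p A)

/-! Unit-only basic formulas. -/

def H01 (N : ℕ) : LF := limp (ppow one 2) (ppow one (N+2))
def C01 (N : ℕ) : LF := limp (ppow one 3) (tensor (ppow one 3) (tensor (H01 N) (H01 N)))

def Gl (N m : ℕ) : LF :=
  tensor (ppow one (m+4)) (limp (ppow one (m+4)) (tensor (ppow one N) (tpow (C01 N) 4)))

def GX (N : ℕ) : List ℕ → LF
  | [] => bot
  | [q] => Gl N q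
  | q :: r :: l => par (Gl N q) (GX N (r :: l))

def E1 (N : ℕ) (X : List ℕ) : LF := limp (tpow (C01 N) 6) (GX N X)

/-- The unit-only encoding `F¹_A`. -/
def F1enc (N p : ℕ) : NF → LF
  | .horn X Y => limp (E1 N (p :: Y)) (E1 N (p :: X))
  | .ohorn X Y₁ Y₂ =>
      limp (witha (E1 N (p :: Y₁)) (E1 N (p :: Y₂))) (E1 N (p :: X))
  | .whorn X₁ Y₁ X₂ Y₂ =>
      witha (limp (E1 N (p :: Y₁)) (E1 N (p :: X₁)))
            (limp (E1 N (p :: Y₂)) (E1 N (p :: X₂)))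
  | .embed U V Y =>
      limp (limp (E1 N (p :: V)) (E1 N (p :: U)))
           (limp (E1 N (p :: Y)) (E1 N [p]))

/-- Two-sided sequent calculus for classical propositional linear logic
(Table 1 of the paper); contexts are multisets, so exchange is implicit. -/
inductive Derives : Multiset LF → Multiset LF → Prop where
  | id (A : LF) : Derives {A} {A}
  | limpL {S1 S2 T1 T2 : Multiset LF} {A B : LF} :
      Derives S1 (A ::ₘ T1) → Derives (B ::ₘ S2) T2 →
      Derives (limp A B ::ₘ (S1 + S2)) (T1 + T2)
  | limpR {S T : Multiset LF} {A B : LF} :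
      Derives (A ::ₘ S) (B ::ₘ T) → Derives S (limp A B ::ₘ T)
  | tensorL {S T : Multiset LF} {A B : LF} :
      Derives (A ::ₘ B ::ₘ S) T → Derives (tensor A B ::ₘ S) T
  | tensorR {S1 S2 T1 T2 : Multiset LF} {A B : LF} :
      Derives S1 (A ::ₘ T1) → Derives S2 (B ::ₘ T2) →
      Derives (S1 + S2) (tensor A B ::ₘ (T1 + T2))
  | parL {S1 S2 T1 T2 : Multiset LF} {A B : LF} :
      Derives (A ::ₘ S1) T1 → Derives (B ::ₘ S2) T2 →
      Derives (par A B ::ₘ (S1 + S2)) (T1 + T2)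
  | parR {S T : Multiset LF} {A B : LF} :
      Derives S (A ::ₘ B ::ₘ T) → Derives S (par A B ::ₘ T)
  | oplusL {S T : Multiset LF} {A B : LF} :
      Derives (A ::ₘ S) T → Derives (B ::ₘ S) T → Derives (oplus A B ::ₘ S) T
  | oplusR1 {S T : Multiset LF} {A B : LF} :
      Derives S (A ::ₘ T) → Derives S (oplus A B ::ₘ T)
  | oplusR2 {S T : Multiset LF} {A B : LF} :
      Derives S (B ::ₘ T) → Derives S (oplus A B ::ₘ T)
  | withL1 {S T : Multiset LF} {A B : LF} :
      Derives (A ::ₘ S) T → Derives (witha A B ::ₘ S) T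
  | withL2 {S T : Multiset LF} {A B : LF} :
      Derives (B ::ₘ S) T → Derives (witha A B ::ₘ S) T
  | withR {S T : Multiset LF} {A B : LF} :
      Derives S (A ::ₘ T) → Derives S (B ::ₘ T) → Derives S (witha A B ::ₘ T)
  | bangL {S T : Multiset LF} {A : LF} :
      Derives (A ::ₘ S) T → Derives (bang A ::ₘ S) T
  | bangR {S : Multiset LF} {C : LF} :
      Derives (S.map bang) {C} → Derives (S.map bang) {bang C}
  | weakL {S T : Multiset LF} {A : LF} :
      Derives S T → Derives (bang A ::ₘ S) T
  | contrL {S T : Multiset LF} {A : LF} :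
      Derives (bang A ::ₘ bang A ::ₘ S) T → Derives (bang A ::ₘ S) T
  | botL : Derives {bot} 0
  | botR {S T : Multiset LF} : Derives S T → Derives S (bot ::ₘ T)
  | oneL {S T : Multiset LF} : Derives S T → Derives (one ::ₘ S) T
  | oneR : Derives 0 {one}

/-- Formulas built from the constant `⊥` by `⊗` and `⊸` only. -/
def MB : LF → Prop
  | .bot => True
  | .tensor A B => MB A ∧ MB B
  | .limp A B => MB A ∧ MB B
  | _ => False

section Aux

@[simp] lemma bc_lit (q : ℕ) : botCount (lit q) = 0 := rfl
@[simp] lemma bc_bot : botCount bot = 1 := rfl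
@[simp] lemma bc_one : botCount one = 0 := rfl
@[simp] lemma bc_tensor (A B : LF) : botCount (tensor A B) = botCount A + botCount B := rfl
@[simp] lemma bc_par (A B : LF) : botCount (par A B) = botCount A + botCount B - 1 := rfl
@[simp] lemma bc_limp (A B : LF) : botCount (limp A B) = botCount B - botCount A := rfl
@[simp] lemma bc_witha (A B : LF) : botCount (witha A B) = min (botCount A) (botCount B) := rfl
@[simp] lemma bc_oplus (A B : LF) : botCount (oplus A B) = max (botCount A) (botCount B) := rfl
@[simp] lemma bc_bang (A : LF) : botCount (bang A) = botCount A := rfl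

/-- Tame formulas for the counting invariant mod `n`. -/
def Tame (n : ℕ) : LF → Prop
  | LF.tensor A B => Tame n A ∧ Tame n B
  | LF.par A B => Tame n A ∧ Tame n B
  | LF.limp A B => Tame n A ∧ Tame n B
  | LF.oplus A B => Tame n A ∧ Tame n B ∧
      ((botCount A : ZMod n) = (botCount B : ZMod n))
  | LF.witha A B => Tame n A ∧ Tame n B ∧
      ((botCount A : ZMod n) = (botCount B : ZMod n))
  | LF.bang A => Tame n A ∧ ((botCount A : ZMod n) = 0)
  | _ => True

lemma tame_consP {n : ℕ} {A : LF} {S : Multiset LF} (hA : Tame n A)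
    (h : ∀ x ∈ S, Tame n x) : ∀ x ∈ A ::ₘ S, Tame n x := by
  intro x hx
  rcases Multiset.mem_cons.mp hx with rfl | hx
  · exact hA
  · exact h x hx

lemma tame_addL {n : ℕ} {S1 S2 : Multiset LF} (h : ∀ x ∈ S1 + S2, Tame n x) :
    ∀ x ∈ S1, Tame n x := fun x hx => h x (Multiset.mem_add.mpr (Or.inl hx))

lemma tame_addR {n : ℕ} {S1 S2 : Multiset LF} (h : ∀ x ∈ S1 + S2, Tame n x) :
    ∀ x ∈ S2, Tame n x := fun x hx => h x (Multiset.mem_add.mpr (Or.inr hx))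

lemma tame_consE {n : ℕ} {A : LF} {S : Multiset LF}
    (h : ∀ x ∈ A ::ₘ S, Tame n x) : Tame n A ∧ ∀ x ∈ S, Tame n x :=
  ⟨h A (Multiset.mem_cons_self _ _), fun x hx => h x (Multiset.mem_cons_of_mem hx)⟩

lemma key (n : ℕ) : ∀ {S T : Multiset LF}, Derives S T →
    (∀ A ∈ S, Tame n A) → (∀ B ∈ T, Tame n B) →
    (((S.map botCount).sum : ℤ) : ZMod n)
      = 1 - (Multiset.card T : ZMod n) + (((T.map botCount).sum : ℤ) : ZMod n) := by
  intro S T h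
  induction h with
  | id A =>
    intro _ _
    simp
  | limpL d1 d2 ih1 ih2 =>
    rename_i S1 S2 T1 T2 A B
    intro hS hT
    obtain ⟨⟨tA, tB⟩, hS'⟩ := tame_consE hS
    have h1 := ih1 (tame_addL hS') (tame_consP tA (tame_addL hT))
    have h2 := ih2 (tame_consP tB (tame_addR hS')) (tame_addR hT)
    simp only [Multiset.map_cons, Multiset.sum_cons, Multiset.map_add, Multiset.sum_add,
      Multiset.card_add, Multiset.card_cons, bc_limp] at h1 h2 ⊢
    push_cast at h1 h2 ⊢
    linear_combination h1 + h2
  | limpR d ih =>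
    rename_i S T A B
    intro hS hT
    obtain ⟨⟨tA, tB⟩, hT'⟩ := tame_consE hT
    have h1 := ih (tame_consP tA hS) (tame_consP tB hT')
    simp only [Multiset.map_cons, Multiset.sum_cons, Multiset.card_cons, bc_limp] at h1 ⊢
    push_cast at h1 ⊢
    linear_combination h1
  | tensorL d ih =>
    rename_i S T A B
    intro hS hT
    obtain ⟨⟨tA, tB⟩, hS'⟩ := tame_consE hS
    have h1 := ih (tame_consP tA (tame_consP tB hS')) hT
    simp only [Multiset.map_cons, Multiset.sum_cons, Multiset.card_cons, bc_tensor] at h1 ⊢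
    push_cast at h1 ⊢
    linear_combination h1
  | tensorR d1 d2 ih1 ih2 =>
    rename_i S1 S2 T1 T2 A B
    intro hS hT
    obtain ⟨⟨tA, tB⟩, hT'⟩ := tame_consE hT
    have h1 := ih1 (tame_addL hS) (tame_consP tA (tame_addL hT'))
    have h2 := ih2 (tame_addR hS) (tame_consP tB (tame_addR hT'))
    simp only [Multiset.map_cons, Multiset.sum_cons, Multiset.map_add, Multiset.sum_add,
      Multiset.card_add, Multiset.card_cons, bc_tensor] at h1 h2 ⊢
    push_cast at h1 h2 ⊢
    linear_combination h1 + h2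
  | parL d1 d2 ih1 ih2 =>
    rename_i S1 S2 T1 T2 A B
    intro hS hT
    obtain ⟨⟨tA, tB⟩, hS'⟩ := tame_consE hS
    have h1 := ih1 (tame_consP tA (tame_addL hS')) (tame_addL hT)
    have h2 := ih2 (tame_consP tB (tame_addR hS')) (tame_addR hT)
    simp only [Multiset.map_cons, Multiset.sum_cons, Multiset.map_add, Multiset.sum_add,
      Multiset.card_add, Multiset.card_cons, bc_par] at h1 h2 ⊢
    push_cast at h1 h2 ⊢
    linear_combination h1 + h2
  | parR d ih =>
    rename_i S T A B
    intro hS hT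
    obtain ⟨⟨tA, tB⟩, hT'⟩ := tame_consE hT
    have h1 := ih hS (tame_consP tA (tame_consP tB hT'))
    simp only [Multiset.map_cons, Multiset.sum_cons, Multiset.card_cons, bc_par] at h1 ⊢
    push_cast at h1 ⊢
    linear_combination h1
  | oplusL d1 d2 ih1 ih2 =>
    rename_i S T A B
    intro hS hT
    obtain ⟨⟨tA, tB, hab⟩, hS'⟩ := tame_consE hS
    have h1 := ih1 (tame_consP tA hS') hT
    have h2 := ih2 (tame_consP tB hS') hT
    simp only [Multiset.map_cons, Multiset.sum_cons, bc_oplus] at h1 h2 ⊢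
    rcases max_choice (botCount A) (botCount B) with hm | hm <;> rw [hm] <;>
      push_cast at h1 h2 ⊢
    · linear_combination h1
    · linear_combination h2
  | oplusR1 d ih =>
    rename_i S T A B
    intro hS hT
    obtain ⟨⟨tA, tB, hab⟩, hT'⟩ := tame_consE hT
    have h1 := ih hS (tame_consP tA hT')
    simp only [Multiset.map_cons, Multiset.sum_cons, Multiset.card_cons, bc_oplus] at h1 ⊢
    rcases max_choice (botCount A) (botCount B) with hm | hm <;> rw [hm] <;>
      push_cast at h1 hab ⊢
    · linear_combination h1
    · linear_combination h1 + hab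
  | oplusR2 d ih =>
    rename_i S T A B
    intro hS hT
    obtain ⟨⟨tA, tB, hab⟩, hT'⟩ := tame_consE hT
    have h1 := ih hS (tame_consP tB hT')
    simp only [Multiset.map_cons, Multiset.sum_cons, Multiset.card_cons, bc_oplus] at h1 ⊢
    rcases max_choice (botCount A) (botCount B) with hm | hm <;> rw [hm] <;>
      push_cast at h1 hab ⊢
    · linear_combination h1 - hab
    · linear_combination h1
  | withL1 d ih =>
    rename_i S T A B
    intro hS hT
    obtain ⟨⟨tA, tB, hab⟩, hS'⟩ := tame_consE hS
    have h1 := ih (tame_consP tA hS') hT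
    simp only [Multiset.map_cons, Multiset.sum_cons, bc_witha] at h1 ⊢
    rcases min_choice (botCount A) (botCount B) with hm | hm <;> rw [hm] <;>
      push_cast at h1 hab ⊢
    · linear_combination h1
    · linear_combination h1 - hab
  | withL2 d ih =>
    rename_i S T A B
    intro hS hT
    obtain ⟨⟨tA, tB, hab⟩, hS'⟩ := tame_consE hS
    have h1 := ih (tame_consP tB hS') hT
    simp only [Multiset.map_cons, Multiset.sum_cons, bc_witha] at h1 ⊢
    rcases min_choice (botCount A) (botCount B) with hm | hm <;> rw [hm] <;>
      push_cast at h1 hab ⊢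
    · linear_combination h1 + hab
    · linear_combination h1
  | withR d1 d2 ih1 ih2 =>
    rename_i S T A B
    intro hS hT
    obtain ⟨⟨tA, tB, hab⟩, hT'⟩ := tame_consE hT
    have h1 := ih1 hS (tame_consP tA hT')
    have h2 := ih2 hS (tame_consP tB hT')
    simp only [Multiset.map_cons, Multiset.sum_cons, Multiset.card_cons, bc_witha] at h1 h2 ⊢
    rcases min_choice (botCount A) (botCount B) with hm | hm <;> rw [hm] <;>
      push_cast at h1 h2 ⊢
    · linear_combination h1
    · linear_combination h2
  | bangL d ih =>
    rename_i S T A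
    intro hS hT
    obtain ⟨⟨tA, _⟩, hS'⟩ := tame_consE hS
    have h1 := ih (tame_consP tA hS') hT
    simpa only [Multiset.map_cons, Multiset.sum_cons, bc_bang] using h1
  | bangR d ih =>
    rename_i S C
    intro hS hT
    obtain ⟨tC, _⟩ := hT (LF.bang C) (Multiset.mem_singleton_self _)
    have h1 := ih hS (tame_consP tC (by intro x hx; simp at hx))
    simpa only [Multiset.map_singleton, Multiset.sum_singleton, Multiset.card_singleton, bc_bang] using h1
  | weakL d ih =>
    rename_i S T A
    intro hS hT
    obtain ⟨⟨tA, hA0⟩, hS'⟩ := tame_consE hS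
    have h1 := ih hS' hT
    simp only [Multiset.map_cons, Multiset.sum_cons, bc_bang] at h1 ⊢
    push_cast at h1 ⊢
    linear_combination h1 + hA0
  | contrL d ih =>
    rename_i S T A
    intro hS hT
    have tbA := (tame_consE hS).1
    have hS' := (tame_consE hS).2
    have h1 := ih (tame_consP tbA (tame_consP tbA hS')) hT
    have hA0 : ((botCount A : ℤ) : ZMod n) = 0 := tbA.2
    simp only [Multiset.map_cons, Multiset.sum_cons, bc_bang] at h1 ⊢
    push_cast at h1 ⊢
    linear_combination h1 - hA0
  | botL =>
    intro _ _
    simp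
  | botR d ih =>
    rename_i S T
    intro hS hT
    obtain ⟨_, hT'⟩ := tame_consE hT
    have h1 := ih hS hT'
    simp only [Multiset.map_cons, Multiset.sum_cons, Multiset.card_cons, bc_bot] at h1 ⊢
    push_cast at h1 ⊢
    linear_combination h1
  | oneL d ih =>
    rename_i S T
    intro hS hT
    obtain ⟨_, hS'⟩ := tame_consE hS
    have h1 := ih hS' hT
    simp only [Multiset.map_cons, Multiset.sum_cons, bc_one] at h1 ⊢
    push_cast at h1 ⊢
    linear_combination h1
  | oneR =>
    intro _ _
    simp

/-- Formulas with no additives and no exponentials. -/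
def Plain : LF → Prop
  | LF.tensor A B => Plain A ∧ Plain B
  | LF.par A B => Plain A ∧ Plain B
  | LF.limp A B => Plain A ∧ Plain B
  | LF.lit _ => True
  | LF.bot => True
  | LF.one => True
  | _ => False

lemma plain_bot : Plain LF.bot := trivial
lemma plain_one : Plain LF.one := trivial

lemma Plain.tame {n : ℕ} : ∀ {A : LF}, Plain A → Tame n A := by
  intro A
  induction A <;> simp [Plain, Tame] <;> tauto

lemma MB.plain : ∀ {A : LF}, MB A → Plain A := by
  intro A
  induction A <;> simp [MB, Plain] <;> tauto

lemma plain_tpow {A : LF} (hA : Plain A) : ∀ k, Plain (tpow A k)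
  | 0 => plain_one
  | 1 => hA
  | (k+2) => ⟨hA, plain_tpow hA (k+1)⟩

lemma plain_H00 (N : ℕ) : Plain (H00 N) :=
  ⟨plain_tpow plain_bot _, plain_tpow plain_bot _⟩

lemma plain_C00 (N : ℕ) : Plain (C00 N) :=
  ⟨⟨plain_tpow (plain_H00 N) _, plain_tpow plain_bot _⟩, plain_tpow plain_bot _⟩

lemma plain_H1 (N : ℕ) : Plain (H1 N) :=
  ⟨plain_tpow (plain_C00 N) _, plain_tpow plain_bot _⟩

lemma plain_Dl (N m : ℕ) : Plain (Dl N m) :=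
  ⟨⟨plain_H1 N, plain_tpow plain_bot _⟩, plain_tpow plain_bot _⟩

lemma plain_DX (N : ℕ) : ∀ l : List ℕ, Plain (DX N l)
  | [] => plain_one
  | [q] => plain_Dl N q
  | q :: r :: l => ⟨plain_Dl N q, plain_DX N (r :: l)⟩

lemma plain_EX (N : ℕ) (X : List ℕ) : Plain (EX N X) :=
  ⟨plain_tpow (plain_C00 N) _, plain_DX N X⟩

lemma bc_tpow (A : LF) : ∀ k, botCount (tpow A k) = (k : ℤ) * botCount A
  | 0 => by simp [tpow]
  | 1 => by simp [tpow]
  | (k+2) => by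
      have ih := bc_tpow A (k+1)
      show botCount A + botCount (tpow A (k+1)) = _
      rw [ih]
      push_cast
      ring

lemma bc_H00 (N : ℕ) : botCount (H00 N) = -(N : ℤ) := by
  show botCount (tpow bot 2) - botCount (tpow bot (N+2)) = _
  rw [bc_tpow, bc_tpow, bc_bot]
  push_cast
  ring

lemma bc_C00 (N : ℕ) : botCount (C00 N) = -2 * (N : ℤ) := by
  show botCount (tpow bot 3) - (botCount (tpow bot 3) - botCount (tpow (H00 N) 2)) = _
  rw [bc_tpow, bc_tpow, bc_H00, bc_bot]
  push_cast
  ring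

lemma bc_H1 (N : ℕ) : botCount (H1 N) = 9 * (N : ℤ) := by
  show botCount (tpow bot N) - botCount (tpow (C00 N) 4) = _
  rw [bc_tpow, bc_tpow, bc_C00, bc_bot]
  push_cast
  ring

lemma bc_Dl (N m : ℕ) : botCount (Dl N m) = 9 * (N : ℤ) := by
  show botCount (tpow bot (m+4)) - (botCount (tpow bot (m+4)) - botCount (H1 N)) = _
  rw [bc_H1]
  ring

lemma bc_DX (N : ℕ) : ∀ l : List ℕ, botCount (DX N l) = 9 * (N : ℤ) * l.length
  | [] => by simp [DX]
  | [q] => by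
      show botCount (Dl N q) = _
      rw [bc_Dl]
      simp
  | q :: r :: l => by
      show botCount (Dl N q) + botCount (DX N (r :: l)) = _
      rw [bc_Dl, bc_DX N (r :: l)]
      simp only [List.length_cons]
      push_cast
      ring

lemma bc_EX (N : ℕ) (X : List ℕ) :
    botCount (EX N X) = -12 * (N : ℤ) + 9 * (N : ℤ) * X.length := by
  show botCount (tpow (C00 N) 6) + botCount (DX N X) = _
  rw [bc_tpow, bc_C00, bc_DX]
  push_cast
  ring

lemma h9 (N : ℕ) : (9 : ZMod (9 * N)) * (N : ZMod (9 * N)) = 0 := by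
  have := ZMod.natCast_self (9 * N)
  push_cast at this
  linear_combination this

lemma zEX (N : ℕ) (X Y : List ℕ) :
    ((botCount (EX N X) : ℤ) : ZMod (9 * N)) = ((botCount (EX N Y) : ℤ) : ZMod (9 * N)) := by
  rw [bc_EX, bc_EX]
  push_cast
  linear_combination ((X.length : ZMod (9 * N)) - (Y.length : ZMod (9 * N))) * h9 N

lemma zEX0 (N : ℕ) (X Y : List ℕ) :
    ((botCount (EX N X) - botCount (EX N Y) : ℤ) : ZMod (9 * N)) = 0 := by
  push_cast
  rw [zEX N X Y]
  ring

lemma zFenc (N p : ℕ) (A : NF) :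
    ((botCount (Fenc N p A) : ℤ) : ZMod (9 * N)) = 0 := by
  cases A with
  | horn X Y =>
      show ((botCount (EX N (p::Y)) - botCount (EX N (p::X)) : ℤ) : ZMod (9 * N)) = 0
      exact zEX0 N _ _
  | ohorn X Y₁ Y₂ =>
      show ((max (botCount (EX N (p::Y₁))) (botCount (EX N (p::Y₂)))
        - botCount (EX N (p::X)) : ℤ) : ZMod (9 * N)) = 0
      rcases max_choice (botCount (EX N (p::Y₁))) (botCount (EX N (p::Y₂))) with hm | hm <;>
        rw [hm]
      · exact zEX0 N _ _
      · exact zEX0 N _ _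
  | whorn X₁ Y₁ X₂ Y₂ =>
      show ((min (botCount (EX N (p::Y₁)) - botCount (EX N (p::X₁)))
        (botCount (EX N (p::Y₂)) - botCount (EX N (p::X₂))) : ℤ) : ZMod (9 * N)) = 0
      rcases min_choice (botCount (EX N (p::Y₁)) - botCount (EX N (p::X₁)))
          (botCount (EX N (p::Y₂)) - botCount (EX N (p::X₂))) with hm | hm <;> rw [hm]
      · exact zEX0 N _ _
      · exact zEX0 N _ _
  | embed U V Y =>
      show (((botCount (EX N (p::Y)) - botCount (EX N [p]))
        - (botCount (EX N (p::V)) - botCount (EX N (p::U))) : ℤ) : ZMod (9 * N)) = 0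
      push_cast
      have h1 := zEX N (p::Y) [p]
      have h2 := zEX N (p::V) (p::U)
      push_cast at h1 h2
      linear_combination h1 - h2

lemma tame_Fenc (N p : ℕ) (A : NF) : Tame (9 * N) (Fenc N p A) := by
  cases A with
  | horn X Y =>
      exact ⟨(plain_EX N _).tame, (plain_EX N _).tame⟩
  | ohorn X Y₁ Y₂ =>
      exact ⟨(plain_EX N _).tame, (plain_EX N _).tame, (plain_EX N _).tame, zEX N _ _⟩
  | whorn X₁ Y₁ X₂ Y₂ =>
      refine ⟨⟨(plain_EX N _).tame, (plain_EX N _).tame⟩,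
        ⟨(plain_EX N _).tame, (plain_EX N _).tame⟩, ?_⟩
      show ((botCount (EX N (p::Y₁)) - botCount (EX N (p::X₁)) : ℤ) : ZMod (9*N))
        = ((botCount (EX N (p::Y₂)) - botCount (EX N (p::X₂)) : ℤ) : ZMod (9*N))
      push_cast
      rw [zEX N (p::Y₁) (p::Y₂), zEX N (p::X₁) (p::X₂)]
  | embed U V Y =>
      exact ⟨⟨(plain_EX N _).tame, (plain_EX N _).tame⟩,
        ⟨(plain_EX N _).tame, (plain_EX N _).tame⟩⟩

lemma zsum_Fenc (N p : ℕ) (Γ : Multiset NF) :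
    ((((Γ.map (Fenc N p)).map botCount).sum : ℤ) : ZMod (9 * N)) = 0 := by
  induction Γ using Multiset.induction with
  | empty => simp
  | cons A Γ ih =>
      simp only [Multiset.map_cons, Multiset.sum_cons]
      rw [Int.cast_add, zFenc, ih]
      ring

lemma zsum_bangFenc (N p : ℕ) (Δ : Multiset NF) :
    ((((Δ.map (fun A => LF.bang (Fenc N p A))).map botCount).sum : ℤ) : ZMod (9 * N)) = 0 := by
  induction Δ using Multiset.induction with
  | empty => simp
  | cons A Δ ih =>
      simp only [Multiset.map_cons, Multiset.sum_cons, bc_bang]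
      rw [Int.cast_add, zFenc, ih]
      ring

end Aux
/-- Lemma 5.0 / L1: if the sequent
`A₁, …, A_k, F_Γ, !F_Δ ⊢ B₁, …, B_m` is derivable in linear logic, where every
`Aᵢ` and `Bⱼ` is built from `⊥` by `⊗, ⊸` (an `Aᵢ` may also be of the form
`E_{Y₁} ⊕ E_{Y₂}`), and `Γ, Δ` are multisets of normalized formulas, then
`Σᵢ #⊥(Aᵢ) ≡ 1 − m + Σⱼ #⊥(Bⱼ) (mod 9N)` (so in particular
`Σᵢ #⊥(Aᵢ) ≡ 1 (mod 9N)` when `m = 0`). -/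
theorem stmt12 (N : ℕ) (hN : 0 < N) (p : ℕ) (As Bs : List LF) (Γ Δ : Multiset NF)
    (hA : ∀ A ∈ As, MB A ∨ ∃ Y₁ Y₂ : List ℕ, A = LF.oplus (EX N Y₁) (EX N Y₂))
    (hB : ∀ B ∈ Bs, MB B)
    (h : Derives ((↑As : Multiset LF) + Γ.map (Fenc N p)
            + Δ.map (fun A => LF.bang (Fenc N p A))) (↑Bs : Multiset LF)) :
    (As.map botCount).sum ≡
      1 - (Bs.length : ℤ) + (Bs.map botCount).sum [ZMOD (9 * (N : ℤ))] := by
  have hS : ∀ A ∈ ((↑As : Multiset LF) + Γ.map (Fenc N p)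
      + Δ.map (fun A => LF.bang (Fenc N p A))), Tame (9 * N) A := by
    intro A hA'
    rcases Multiset.mem_add.mp hA' with hA' | hA'
    · rcases Multiset.mem_add.mp hA' with hA' | hA'
      · rcases hA A (by simpa using hA') with hMB | ⟨Y₁, Y₂, rfl⟩
        · exact hMB.plain.tame
        · exact ⟨(plain_EX N _).tame, (plain_EX N _).tame, zEX N _ _⟩
      · obtain ⟨B, _, rfl⟩ := Multiset.mem_map.mp hA'
        exact tame_Fenc N p B
    · obtain ⟨B, _, rfl⟩ := Multiset.mem_map.mp hA'
      exact ⟨tame_Fenc N p B, zFenc N p B⟩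
  have hT : ∀ B ∈ (↑Bs : Multiset LF), Tame (9 * N) B := by
    intro B hB'
    exact ((hB B (by simpa using hB')).plain).tame
  have hk := key (9 * N) h hS hT
  simp only [Multiset.map_add, Multiset.sum_add] at hk
  rw [Int.cast_add, Int.cast_add, zsum_Fenc, zsum_bangFenc] at hk
  have hcard : (Multiset.card (↑Bs : Multiset LF) : ZMod (9 * N)) = (Bs.length : ZMod (9*N)) := by
    simp
  have hBsum : (((↑Bs : Multiset LF).map botCount).sum : ℤ) = (Bs.map botCount).sum := by
    simp
  have hAsum : (((↑As : Multiset LF).map botCount).sum : ℤ) = (As.map botCount).sum := by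
    simp
  rw [hcard, hBsum, hAsum] at hk
  have : (9 * (N : ℤ)) = ((9 * N : ℕ) : ℤ) := by push_cast; ring
  rw [this, ← ZMod.intCast_eq_intCast_iff]
  push_cast at hk ⊢
  linear_combination hk
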